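/- Let X be a rank-k positive semidefinite matrix in S^p_{⪰0}(G) with k-dimensional Gram representation (u_1,…,u_p). Then X is extremal in S^p_{⪰0}(G) if and only if the real span of the matrices { u_i u_j^T + u_j u_i^T : {i,j} a nonedge of G } has dimension C(k+1,2) − 1. -/

import Mathlib

open Matrix BigOperators Module
open scoped RealInnerProductSpace

noncomputable def toMat (k : ℕ) :
    EuclideanSpace ℝ (Fin k × Fin k) ≃ₗ[ℝ] Matrix (Fin k) (Fin k) ℝ :=
  (WithLp.linearEquiv 2 ℝ (Fin k × Fin k → ℝ)).trans (LinearEquiv.curry ℝ ℝ (Fin k) (Fin k))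

@[simp] lemma toMat_apply {k : ℕ} (x : EuclideanSpace ℝ (Fin k × Fin k)) (a b : Fin k) :
    toMat k x a b = x (a, b) := rfl

@[simp] lemma toMat_symm_apply {k : ℕ} (M : Matrix (Fin k) (Fin k) ℝ) (q : Fin k × Fin k) :
    (toMat k).symm M q = M q.1 q.2 := rfl

lemma inner_toMat {k : ℕ} (x y : EuclideanSpace ℝ (Fin k × Fin k)) :
    ⟪x, y⟫ = ∑ a, ∑ b, toMat k x a b * toMat k y a b := by
  simp [PiLp.inner_apply, RCLike.inner_apply, Fintype.sum_prod_type]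
  exact Finset.sum_congr rfl fun a _ => Finset.sum_congr rfl fun b _ => mul_comm _ _

def symE (k : ℕ) : Submodule ℝ (EuclideanSpace ℝ (Fin k × Fin k)) where
  carrier := {x | ∀ a b : Fin k, x (a, b) = x (b, a)}
  add_mem' hx hy a b := by
    simp only [PiLp.add_apply]
    rw [hx a b, hy a b]
  zero_mem' a b := rfl
  smul_mem' c x hx a b := by
    simp only [PiLp.smul_apply]
    rw [hx a b]

noncomputable def symEquiv (k : ℕ) :
    (symE k) ≃ₗ[ℝ] ({q : Fin k × Fin k // q.1 ≤ q.2} → ℝ) where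
  toFun S q := S.1 q.1
  map_add' _ _ := rfl
  map_smul' _ _ := rfl
  invFun x := ⟨WithLp.toLp 2 (fun q => if h : q.1 ≤ q.2 then x ⟨q, h⟩ else x ⟨(q.2, q.1), le_of_not_ge h⟩), by
    intro a b
    show (if h : a ≤ b then x ⟨(a, b), h⟩ else x ⟨(b, a), le_of_not_ge h⟩)
        = (if h : b ≤ a then x ⟨(b, a), h⟩ else x ⟨(a, b), le_of_not_ge h⟩)
    rcases le_or_gt a b with h | h
    · by_cases h' : b ≤ a
      · have hab : a = b := le_antisymm h h'
        subst hab; rfl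
      · rw [dif_pos h, dif_neg h']
    · rw [dif_neg (not_le_of_gt h), dif_pos (le_of_lt h)]⟩
  left_inv S := by
    apply Subtype.ext
    ext q
    show (if h : q.1 ≤ q.2 then S.1 (q.1, q.2) else S.1 (q.2, q.1)) = S.1 q
    split_ifs with h
    · rfl
    · exact (S.2 q.2 q.1).trans (by rfl)
  right_inv x := by
    funext q
    show (if h : q.1.1 ≤ q.1.2 then x ⟨(q.1.1, q.1.2), h⟩ else _) = x q
    rw [dif_pos q.2]

lemma finrank_symE (k : ℕ) : finrank ℝ (symE k) = (k + 1).choose 2 := by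
  rw [(symEquiv k).finrank_eq, Module.finrank_pi]
  have := Fintype.card_congr (Sym2.sortEquiv (α := Fin k))
  rw [← this, Sym2.card, Fintype.card_fin]

lemma exists_left_inverse {p k : ℕ} (U : Matrix (Fin p) (Fin k) ℝ) (h : U.rank = k) :
    ∃ V : Matrix (Fin k) (Fin p) ℝ, V * U = 1 := by
  have hker : LinearMap.ker (Matrix.toLin' U) = ⊥ := by
    have h1 := LinearMap.finrank_range_add_finrank_ker (Matrix.toLin' U)
    have h2 : finrank ℝ (LinearMap.range (Matrix.toLin' U)) = k := by
      rw [Matrix.toLin'_apply']; exact h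
    rw [h2, Module.finrank_pi, Fintype.card_fin] at h1
    have h3 : finrank ℝ (LinearMap.ker (Matrix.toLin' U)) = 0 := by omega
    exact Submodule.finrank_eq_zero.mp h3
  obtain ⟨g, hg⟩ := (Matrix.toLin' U).exists_leftInverse_of_injective hker
  refine ⟨LinearMap.toMatrix' g, ?_⟩
  conv_lhs => rw [← LinearMap.toMatrix'_toLin' U]
  rw [← LinearMap.toMatrix'_comp, hg, LinearMap.toMatrix'_id]

lemma posSemidef_add_eq_zero {n : ℕ} {A B : Matrix (Fin n) (Fin n) ℝ}
    (hA : A.PosSemidef) (hB : B.PosSemidef) (h : A + B = 0) : A = 0 := by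
  have h0 : ∀ x, A *ᵥ x = 0 := by
    intro x
    rw [← hA.dotProduct_mulVec_zero_iff]
    have h1 := hA.dotProduct_mulVec_nonneg x
    have h2 := hB.dotProduct_mulVec_nonneg x
    have h3 : star x ⬝ᵥ A *ᵥ x + star x ⬝ᵥ B *ᵥ x = 0 := by
      rw [← dotProduct_add, ← Matrix.add_mulVec, h, Matrix.zero_mulVec, dotProduct_zero]
    linarith
  ext i j
  have := congrFun (h0 (Pi.single j 1)) i
  simpa using this

lemma mul_eq_zero_of_psd {m n : ℕ} {A : Matrix (Fin n) (Fin n) ℝ} (hA : A.PosSemidef)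
    (M : Matrix (Fin m) (Fin n) ℝ) (h : M * A * Mᵀ = 0) : M * A = 0 := by
  obtain ⟨C, rfl⟩ : ∃ C : Matrix (Fin n) (Fin n) ℝ, A = Cᴴ * C := by
    open scoped MatrixOrder in exact CStarAlgebra.nonneg_iff_eq_star_mul_self.mp hA.nonneg
  have hCM : C * Mᵀ = 0 := by
    rw [← Matrix.conjTranspose_mul_self_eq_zero (A := C * Mᵀ)]
    calc (C * Mᵀ)ᴴ * (C * Mᵀ) = (Mᵀ)ᴴ * Cᴴ * (C * Mᵀ) := by rw [Matrix.conjTranspose_mul]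
    _ = M * (Cᴴ * C) * Mᵀ := by
        rw [Matrix.conjTranspose_eq_transpose_of_trivial, Matrix.transpose_transpose]
        simp only [Matrix.mul_assoc]
    _ = 0 := h
  calc M * (Cᴴ * C) = ((Mᵀ)ᴴ * Cᴴ) * C := by
        rw [Matrix.conjTranspose_eq_transpose_of_trivial (Mᵀ), Matrix.transpose_transpose,
          Matrix.mul_assoc]
  _ = (C * Mᵀ)ᴴ * C := by rw [Matrix.conjTranspose_mul]
  _ = 0 := by rw [hCM, Matrix.conjTranspose_zero, Matrix.zero_mul]

lemma sandwich_apply {p k : ℕ} (u : Fin p → Fin k → ℝ) (S : Matrix (Fin k) (Fin k) ℝ)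
    (i j : Fin p) :
    ((Matrix.of u) * S * (Matrix.of u)ᵀ) i j = ∑ a, ∑ b, u i a * S a b * u j b := by
  simp only [Matrix.mul_apply, Matrix.transpose_apply, Matrix.of_apply, Finset.sum_mul]
  rw [Finset.sum_comm]

lemma gram_decomp {p k : ℕ} {X A B : Matrix (Fin p) (Fin p) ℝ} {U : Matrix (Fin p) (Fin k) ℝ}
    {V : Matrix (Fin k) (Fin p) ℝ} (hXU : X = U * Uᵀ) (hVU : V * U = 1)
    (hA : A.PosSemidef) (hB : B.PosSemidef) (hsum : X = A + B) :
    A = U * (V * A * Vᵀ) * Uᵀ := by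
  set P : Matrix (Fin p) (Fin p) ℝ := U * V with hP
  have hPX : (1 - P) * X = 0 := by
    rw [hXU, Matrix.sub_mul, Matrix.one_mul, hP, Matrix.mul_assoc U V (U * Uᵀ),
      ← Matrix.mul_assoc V U, hVU, Matrix.one_mul, sub_self]
  have hMXM : (1 - P) * X * (1 - P)ᵀ = 0 := by rw [hPX, Matrix.zero_mul]
  have hsplit : (1 - P) * A * (1 - P)ᵀ + (1 - P) * B * (1 - P)ᵀ = 0 := by
    rw [← Matrix.add_mul, ← Matrix.mul_add, ← hsum, hMXM]
  have hApsd : ((1 - P) * A * (1 - P)ᵀ).PosSemidef := by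
    have := hA.mul_mul_conjTranspose_same (1 - P)
    rwa [Matrix.conjTranspose_eq_transpose_of_trivial] at this
  have hBpsd : ((1 - P) * B * (1 - P)ᵀ).PosSemidef := by
    have := hB.mul_mul_conjTranspose_same (1 - P)
    rwa [Matrix.conjTranspose_eq_transpose_of_trivial] at this
  have hMA : (1 - P) * A = 0 := by
    exact mul_eq_zero_of_psd hA (1 - P) (posSemidef_add_eq_zero hApsd hBpsd hsplit)
  have hPA : P * A = A := by
    have h' : A - P * A = 0 := by
      calc A - P * A = (1 - P) * A := by rw [Matrix.sub_mul, Matrix.one_mul]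
      _ = 0 := hMA
    exact (sub_eq_zero.mp h').symm
  have hAT : Aᵀ = A := by
    have := hA.isHermitian
    rwa [Matrix.IsHermitian, Matrix.conjTranspose_eq_transpose_of_trivial] at this
  have hAP : A * Pᵀ = A := by
    calc A * Pᵀ = (P * Aᵀ)ᵀ := by
          conv_rhs => rw [Matrix.transpose_mul, Matrix.transpose_transpose]
    _ = (P * A)ᵀ := by rw [hAT]
    _ = A := by rw [hPA, hAT]
  calc A = P * A * Pᵀ := by rw [hPA, hAP]
  _ = U * (V * A * Vᵀ) * Uᵀ := by
      rw [hP, Matrix.transpose_mul]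
      simp only [Matrix.mul_assoc]

lemma quad_bound {k : ℕ} (S : Matrix (Fin k) (Fin k) ℝ) (x : Fin k → ℝ) :
    |x ⬝ᵥ S *ᵥ x| ≤ (∑ a, ∑ b, |S a b|) * (∑ i, x i * x i) := by
  have hq : ∀ a b : Fin k, |x a * x b| ≤ ∑ i, x i * x i := by
    intro a b
    have h1 : x a * x a ≤ ∑ i, x i * x i :=
      Finset.single_le_sum (f := fun i => x i * x i)
        (fun i _ => mul_self_nonneg (x i)) (Finset.mem_univ a)
    have h2 : x b * x b ≤ ∑ i, x i * x i :=
      Finset.single_le_sum (f := fun i => x i * x i)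
        (fun i _ => mul_self_nonneg (x i)) (Finset.mem_univ b)
    have h3 : |x a * x b| ≤ (x a * x a + x b * x b) / 2 := by
      rw [abs_mul]
      nlinarith [sq_nonneg (|x a| - |x b|), sq_abs (x a), sq_abs (x b), abs_nonneg (x a),
        abs_nonneg (x b)]
    linarith
  have hexp : x ⬝ᵥ S *ᵥ x = ∑ a, ∑ b, x a * S a b * x b := by
    simp only [dotProduct, Matrix.mulVec, dotProduct, Finset.mul_sum]
    exact Finset.sum_congr rfl fun a _ => Finset.sum_congr rfl fun b _ => by ring
  rw [hexp, Finset.sum_mul]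
  calc |∑ a, ∑ b, x a * S a b * x b| ≤ ∑ a, |∑ b, x a * S a b * x b| :=
        Finset.abs_sum_le_sum_abs _ _
  _ ≤ ∑ a, ∑ b, |x a * S a b * x b| :=
      Finset.sum_le_sum fun a _ => Finset.abs_sum_le_sum_abs _ _
  _ ≤ ∑ a, (∑ b, |S a b|) * (∑ i, x i * x i) := by
      refine Finset.sum_le_sum fun a _ => ?_
      rw [Finset.sum_mul]
      refine Finset.sum_le_sum fun b _ => ?_
      have : |x a * S a b * x b| = |S a b| * |x a * x b| := by
        rw [← abs_mul]; ring_nf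
      rw [this]
      exact mul_le_mul_of_nonneg_left (hq a b) (abs_nonneg _)

lemma half_one_add_smul_posSemidef {k : ℕ} {S : Matrix (Fin k) (Fin k) ℝ}
    (hS : Sᵀ = S) {t : ℝ} (ht : 0 < t) (htc : t * (∑ a, ∑ b, |S a b|) ≤ 1/2) :
    ((1/2 : ℝ) • (1 : Matrix (Fin k) (Fin k) ℝ) + t • S).PosSemidef := by
  refine Matrix.PosSemidef.of_dotProduct_mulVec_nonneg ?_ ?_
  · rw [Matrix.IsHermitian, Matrix.conjTranspose_eq_transpose_of_trivial,
      Matrix.transpose_add, Matrix.transpose_smul, Matrix.transpose_smul,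
      Matrix.transpose_one, hS]
  · intro x
    have hb := quad_bound S x
    have hxx : (0:ℝ) ≤ ∑ i, x i * x i := Finset.sum_nonneg fun i _ => mul_self_nonneg (x i)
    have heval : star x ⬝ᵥ ((1/2 : ℝ) • (1 : Matrix (Fin k) (Fin k) ℝ) + t • S) *ᵥ x
        = (1/2) * (∑ i, x i * x i) + t * (x ⬝ᵥ S *ᵥ x) := by
      rw [star_trivial, Matrix.add_mulVec, Matrix.smul_mulVec, Matrix.smul_mulVec,
        Matrix.one_mulVec, dotProduct_add, dotProduct_smul, dotProduct_smul]
      simp [dotProduct, smul_eq_mul]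
    rw [heval]
    have habs := abs_le.mp hb
    have hS0 : (0:ℝ) ≤ ∑ a, ∑ b, |S a b| :=
      Finset.sum_nonneg fun a _ => Finset.sum_nonneg fun b _ => abs_nonneg _
    nlinarith [habs.1, habs.2, mul_le_mul_of_nonneg_left habs.1 (le_of_lt ht),
      mul_le_mul_of_nonneg_left habs.2 (le_of_lt ht),
      mul_le_mul_of_nonneg_right htc hxx]

lemma one_sandwich {p k : ℕ} (u : Fin p → Fin k → ℝ) (i j : Fin p) :
    ∑ a, ∑ b, u i a * (1 : Matrix (Fin k) (Fin k) ℝ) a b * u j b = ∑ l, u i l * u j l := by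
  refine Finset.sum_congr rfl fun a _ => ?_
  simp [Matrix.one_apply, ite_mul, mul_ite]

lemma sandwich_affine {p k : ℕ} (u : Fin p → Fin k → ℝ) (S : Matrix (Fin k) (Fin k) ℝ)
    (c t : ℝ) (i j : Fin p) :
    ((Matrix.of u) * (c • (1 : Matrix (Fin k) (Fin k) ℝ) + t • S) * (Matrix.of u)ᵀ) i j
      = c * (∑ l, u i l * u j l) + t * (∑ a, ∑ b, u i a * S a b * u j b) := by
  rw [sandwich_apply]
  have hterm : ∀ a b : Fin k,
      u i a * ((c • (1 : Matrix (Fin k) (Fin k) ℝ) + t • S) a b) * u j b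
        = c * (u i a * (1 : Matrix (Fin k) (Fin k) ℝ) a b * u j b)
          + t * (u i a * S a b * u j b) := by
    intro a b
    simp only [Matrix.add_apply, Matrix.smul_apply, smul_eq_mul]
    ring
  simp_rw [hterm, Finset.sum_add_distrib, ← Finset.mul_sum]
  rw [one_sandwich]


/-- The cone of real positive semidefinite matrices with zeros at nonedges of a graph
with adjacency relation `Adj`. -/
def psdCone {n : Type*} [Fintype n] (Adj : n → n → Prop) : Set (Matrix n n ℝ) :=
  {X | X.PosSemidef ∧ ∀ i j, i ≠ j → ¬ Adj i j → X i j = 0}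

/-- `X` lies on an extreme ray of the convex cone `S`: it belongs to `S` and whenever
`X = A + B` with `A, B ∈ S`, both `A` and `B` are nonnegative multiples of `X`. -/
def IsExtremalIn {n : Type*} [Fintype n] (S : Set (Matrix n n ℝ)) (X : Matrix n n ℝ) : Prop :=
  X ∈ S ∧ ∀ A B : Matrix n n ℝ, A ∈ S → B ∈ S → X = A + B →
    (∃ c : ℝ, 0 ≤ c ∧ A = c • X) ∧ (∃ d : ℝ, 0 ≤ d ∧ B = d • X)

/-- The dimension theorem of Agler–Helton–McCullough–Rodman: a rank-`k` matrix
`X ∈ S^p_⪰0(G)` with `k`-dimensional Gram representation `(u_1,…,u_p)` is extremal if and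
only if the span of `{u_i u_jᵀ + u_j u_iᵀ : {i,j} a nonedge of G}` has dimension
`C(k+1,2) - 1`. -/
theorem dimension_theorem (p k : ℕ) (G : SimpleGraph (Fin p))
    (X : Matrix (Fin p) (Fin p) ℝ) (hX : X ∈ psdCone G.Adj) (hrank : X.rank = k)
    (u : Fin p → (Fin k → ℝ)) (hu : ∀ i j, X i j = ∑ l, u i l * u j l) :
    IsExtremalIn (psdCone G.Adj) X ↔
      Module.finrank ℝ (Submodule.span ℝ
        {M : Matrix (Fin k) (Fin k) ℝ | ∃ i j : Fin p, i ≠ j ∧ ¬ G.Adj i j ∧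
          M = Matrix.vecMulVec (u i) (u j) + Matrix.vecMulVec (u j) (u i)}) =
        (k + 1).choose 2 - 1 := by
  classical
  obtain ⟨hXpsd, hXzero⟩ := hX
  set genSet : Set (Matrix (Fin k) (Fin k) ℝ) :=
    {M : Matrix (Fin k) (Fin k) ℝ | ∃ i j : Fin p, i ≠ j ∧ ¬ G.Adj i j ∧
      M = Matrix.vecMulVec (u i) (u j) + Matrix.vecMulVec (u j) (u i)} with hgenSet
  rcases Nat.eq_zero_or_pos k with hk0 | hk
  · -- degenerate case k = 0
    subst hk0
    have hX0 : X = 0 := by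
      ext i j
      rw [hu]
      simp
    constructor
    · intro _
      haveI : Subsingleton (Matrix (Fin 0) (Fin 0) ℝ) := ⟨fun M N => by ext i _; exact i.elim0⟩
      rw [Module.finrank_zero_of_subsingleton]
      rfl
    · intro _
      refine ⟨⟨hXpsd, hXzero⟩, fun A B hA hB hsum => ?_⟩
      have hAB0 : A + B = 0 := by rw [← hsum, hX0]
      have hA0 : A = 0 := posSemidef_add_eq_zero hA.1 hB.1 hAB0
      have hB0 : B = 0 := posSemidef_add_eq_zero hB.1 hA.1 (by rw [add_comm]; exact hAB0)
      exact ⟨⟨0, le_refl 0, by rw [hA0, zero_smul]⟩, ⟨0, le_refl 0, by rw [hB0, zero_smul]⟩⟩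
  · -- main case k ≥ 1
    set U : Matrix (Fin p) (Fin k) ℝ := Matrix.of u with hUdef
    have hXU : X = U * Uᵀ := by
      ext i j
      rw [hu]
      simp only [Matrix.mul_apply, Matrix.transpose_apply]
      rfl
    have hrankU : U.rank = k := by
      calc U.rank = (U * Uᵀ).rank := (Matrix.rank_self_mul_transpose U).symm
      _ = X.rank := by rw [hXU]
      _ = k := hrank
    obtain ⟨V, hVU⟩ := exists_left_inverse U hrankU
    have hVsand : ∀ M : Matrix (Fin k) (Fin k) ℝ, V * (U * M * Uᵀ) * Vᵀ = M := by
      intro M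
      have hUV : Uᵀ * Vᵀ = 1 := by
        rw [← Matrix.transpose_mul, hVU, Matrix.transpose_one]
      calc V * (U * M * Uᵀ) * Vᵀ = (V * U) * (M * (Uᵀ * Vᵀ)) := by
            simp only [Matrix.mul_assoc]
      _ = M := by rw [hVU, hUV, Matrix.one_mul, Matrix.mul_one]
    -- Euclidean-space versions
    set genE : Set (EuclideanSpace ℝ (Fin k × Fin k)) := (toMat k).symm '' genSet with hgenE
    set WE : Submodule ℝ (EuclideanSpace ℝ (Fin k × Fin k)) := Submodule.span ℝ genE with hWE
    have hWrank : finrank ℝ WE = finrank ℝ (Submodule.span ℝ genSet) := by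
      rw [hWE, hgenE, Submodule.span_image_linearEquiv]
      exact LinearEquiv.finrank_map_eq _ _
    set idE : EuclideanSpace ℝ (Fin k × Fin k) := (toMat k).symm 1 with hidE
    have hidE_mem : idE ∈ symE k := by
      intro a b
      show (1 : Matrix (Fin k) (Fin k) ℝ) a b = (1 : Matrix (Fin k) (Fin k) ℝ) b a
      simp [Matrix.one_apply, eq_comm]
    have hidE0 : idE ≠ 0 := by
      intro h
      have h1 : (1 : Matrix (Fin k) (Fin k) ℝ) = 0 := by
        have h2 := congrArg (toMat k) h
        rwa [LinearEquiv.apply_symm_apply, map_zero] at h2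
      have h3 := Matrix.ext_iff.mpr h1 ⟨0, hk⟩ ⟨0, hk⟩
      simp [Matrix.one_apply] at h3
    have hinner_gen : ∀ (i j : Fin p) (sE : EuclideanSpace ℝ (Fin k × Fin k)),
        ⟪(toMat k).symm (Matrix.vecMulVec (u i) (u j) + Matrix.vecMulVec (u j) (u i)), sE⟫
          = (∑ a, ∑ b, u i a * (toMat k sE) a b * u j b)
            + (∑ a, ∑ b, u j a * (toMat k sE) a b * u i b) := by
      intro i j sE
      rw [inner_toMat, LinearEquiv.apply_symm_apply]
      simp only [Matrix.add_apply, Matrix.vecMulVec_apply, add_mul, Finset.sum_add_distrib]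
      congr 1
      · exact Finset.sum_congr rfl fun a _ => Finset.sum_congr rfl fun b _ => by ring
      · exact Finset.sum_congr rfl fun a _ => Finset.sum_congr rfl fun b _ => by ring
    have hinner_id : ∀ sE : EuclideanSpace ℝ (Fin k × Fin k),
        ⟪idE, sE⟫ = ∑ a, (toMat k sE) a a := by
      intro sE
      rw [hidE, inner_toMat, LinearEquiv.apply_symm_apply]
      refine Finset.sum_congr rfl fun a _ => ?_
      simp [Matrix.one_apply, ite_mul]
    set Z : Submodule ℝ (EuclideanSpace ℝ (Fin k × Fin k)) := (ℝ ∙ idE)ᗮ ⊓ symE k with hZ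
    have hspan_le : (ℝ ∙ idE) ≤ symE k := by
      rw [Submodule.span_singleton_le_iff_mem]
      exact hidE_mem
    have hchoose1 : 1 ≤ (k + 1).choose 2 := Nat.choose_pos (by omega)
    have hZrank : finrank ℝ Z = (k + 1).choose 2 - 1 := by
      rw [hZ]
      refine Submodule.finrank_add_inf_finrank_orthogonal' hspan_le ?_
      rw [finrank_span_singleton hidE0, finrank_symE]
      omega
    have hWZ : WE ≤ Z := by
      rw [hWE, Submodule.span_le]
      rintro gE ⟨g, ⟨i, j, hne, hnadj, rfl⟩, rfl⟩
      rw [SetLike.mem_coe, Submodule.mem_inf]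
      constructor
      · rw [Submodule.mem_orthogonal_singleton_iff_inner_right]
        rw [hinner_id, LinearEquiv.apply_symm_apply]
        have hdiag : ∑ a, (Matrix.vecMulVec (u i) (u j) + Matrix.vecMulVec (u j) (u i)) a a
            = 2 * ∑ l, u i l * u j l := by
          simp only [Matrix.add_apply, Matrix.vecMulVec_apply, Finset.sum_add_distrib, two_mul]
          congr 1
          exact Finset.sum_congr rfl fun a _ => by ring
        rw [hdiag, ← hu i j, hXzero i j hne hnadj, mul_zero]
      · intro a b
        show (Matrix.vecMulVec (u i) (u j) + Matrix.vecMulVec (u j) (u i)) a b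
            = (Matrix.vecMulVec (u i) (u j) + Matrix.vecMulVec (u j) (u i)) b a
        simp only [Matrix.add_apply, Matrix.vecMulVec_apply]
        ring
    constructor
    · -- extremal → dimension
      intro hext
      rw [← hWrank]
      by_contra hnedim
      have hle : finrank ℝ WE ≤ (k + 1).choose 2 - 1 := by
        have := Submodule.finrank_mono hWZ
        rwa [hZrank] at this
      have hsum2 := Submodule.finrank_add_inf_finrank_orthogonal hWZ
      have hpos : 0 < finrank ℝ ((WEᗮ ⊓ Z : Submodule ℝ (EuclideanSpace ℝ (Fin k × Fin k)))) := by
        rw [hZrank] at hsum2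
        omega
      have hnebot : (WEᗮ ⊓ Z : Submodule ℝ (EuclideanSpace ℝ (Fin k × Fin k))) ≠ ⊥ := by
        intro h
        rw [h, finrank_bot] at hpos
        omega
      obtain ⟨sE, hsEmem, hsE0⟩ := (Submodule.ne_bot_iff _).mp hnebot
      obtain ⟨hsEorth, hsEid, hsEsym⟩ := hsEmem
      set S : Matrix (Fin k) (Fin k) ℝ := toMat k sE with hS
      have hSsym : Sᵀ = S := by
        ext a b
        exact (hsEsym a b).symm
      have htr : ∑ a, S a a = 0 := by
        have h0 := Submodule.mem_orthogonal_singleton_iff_inner_right.mp hsEid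
        rwa [hinner_id] at h0
      have hquad : ∀ i j : Fin p, i ≠ j → ¬ G.Adj i j →
          ∑ a, ∑ b, u i a * S a b * u j b = 0 := by
        intro i j hne' hnadj
        have hgmem : (toMat k).symm
            (Matrix.vecMulVec (u i) (u j) + Matrix.vecMulVec (u j) (u i)) ∈ WE := by
          apply Submodule.subset_span
          exact ⟨_, ⟨i, j, hne', hnadj, rfl⟩, rfl⟩
        have h0 := Submodule.inner_right_of_mem_orthogonal hgmem hsEorth
        rw [hinner_gen i j sE] at h0
        have hswap : ∑ a, ∑ b, u j a * (toMat k sE) a b * u i b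
            = ∑ a, ∑ b, u i a * (toMat k sE) a b * u j b := by
          rw [Finset.sum_comm]
          refine Finset.sum_congr rfl fun a _ => Finset.sum_congr rfl fun b _ => ?_
          rw [show (toMat k sE) b a = (toMat k sE) a b from hsEsym b a]
          ring
        rw [hswap] at h0
        have : (2 : ℝ) * ∑ a, ∑ b, u i a * (toMat k sE) a b * u j b = 0 := by
          rw [two_mul]; exact h0
        have h2 := mul_eq_zero.mp this
        rcases h2 with h2 | h2
        · norm_num at h2
        · exact h2
      set cS : ℝ := ∑ a, ∑ b, |S a b| with hcS
      have hcS0 : (0:ℝ) ≤ cS :=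
        Finset.sum_nonneg fun a _ => Finset.sum_nonneg fun b _ => abs_nonneg _
      set t : ℝ := 1 / (2 * (cS + 1)) with ht
      have ht0 : (0:ℝ) < t := by
        rw [ht]
        positivity
      have htc : t * cS ≤ 1/2 := by
        rw [ht, div_mul_eq_mul_div, one_mul, div_le_div_iff₀ (by linarith) two_pos]
        linarith
      set Mp : Matrix (Fin k) (Fin k) ℝ := (1/2 : ℝ) • 1 + t • S with hMp
      set Mm : Matrix (Fin k) (Fin k) ℝ := (1/2 : ℝ) • 1 + t • (-S) with hMm
      have hMp_psd : Mp.PosSemidef := half_one_add_smul_posSemidef hSsym ht0 htc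
      have hMm_psd : Mm.PosSemidef := by
        refine half_one_add_smul_posSemidef (S := -S) (by rw [Matrix.transpose_neg, hSsym]) ht0 ?_
        have habs : ∑ a, ∑ b, |(-S) a b| = cS := by
          simp [hcS]
        rw [habs]
        exact htc
      set A : Matrix (Fin p) (Fin p) ℝ := U * Mp * Uᵀ with hAdef
      set B : Matrix (Fin p) (Fin p) ℝ := U * Mm * Uᵀ with hBdef
      have hXAB : X = A + B := by
        have hMsum : Mp + Mm = (1 : Matrix (Fin k) (Fin k) ℝ) := by
          rw [hMp, hMm, smul_neg]
          have h12 : (1/2 : ℝ) • (1 : Matrix (Fin k) (Fin k) ℝ)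
              + (1/2 : ℝ) • (1 : Matrix (Fin k) (Fin k) ℝ) = 1 := by
            rw [← add_smul]
            norm_num
          calc (1/2 : ℝ) • (1 : Matrix (Fin k) (Fin k) ℝ) + t • S
                + ((1/2 : ℝ) • (1 : Matrix (Fin k) (Fin k) ℝ) - t • S)
              = (1/2 : ℝ) • (1 : Matrix (Fin k) (Fin k) ℝ)
                + (1/2 : ℝ) • (1 : Matrix (Fin k) (Fin k) ℝ) := by abel
          _ = 1 := h12
        calc X = U * Uᵀ := hXU
        _ = U * (Mp + Mm) * Uᵀ := by rw [hMsum, Matrix.mul_one]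
        _ = A + B := by rw [Matrix.mul_add, Matrix.add_mul]
      have hAcone : A ∈ psdCone G.Adj := by
        refine ⟨?_, ?_⟩
        · have hps := hMp_psd.mul_mul_conjTranspose_same U
          rwa [Matrix.conjTranspose_eq_transpose_of_trivial] at hps
        · intro i j hne' hnadj
          have := sandwich_affine u S (1/2) t i j
          rw [hAdef, hUdef]
          rw [this, ← hu i j, hXzero i j hne' hnadj, hquad i j hne' hnadj, mul_zero, mul_zero,
            add_zero]
      have hBcone : B ∈ psdCone G.Adj := by
        refine ⟨?_, ?_⟩
        · have hps := hMm_psd.mul_mul_conjTranspose_same U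
          rwa [Matrix.conjTranspose_eq_transpose_of_trivial] at hps
        · intro i j hne' hnadj
          have hqneg : ∑ a, ∑ b, u i a * (-S) a b * u j b = 0 := by
            have h1 : ∑ a, ∑ b, u i a * (-S) a b * u j b
                = -(∑ a, ∑ b, u i a * S a b * u j b) := by
              rw [← Finset.sum_neg_distrib]
              refine Finset.sum_congr rfl fun a _ => ?_
              rw [← Finset.sum_neg_distrib]
              refine Finset.sum_congr rfl fun b _ => ?_
              simp only [Matrix.neg_apply]
              ring
            rw [h1, hquad i j hne' hnadj, neg_zero]
          have := sandwich_affine u (-S) (1/2) t i j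
          rw [hBdef, hUdef]
          rw [this, ← hu i j, hXzero i j hne' hnadj, hqneg, mul_zero, mul_zero, add_zero]
      obtain ⟨⟨c, hc0, hAc⟩, -⟩ := hext.2 A B hAcone hBcone hXAB
      have hMp_eq : Mp = c • (1 : Matrix (Fin k) (Fin k) ℝ) := by
        have h1 : U * Mp * Uᵀ = U * (c • (1 : Matrix (Fin k) (Fin k) ℝ)) * Uᵀ := by
          rw [← hAdef, hAc, hXU, Matrix.mul_smul, Matrix.mul_one, Matrix.smul_mul]
        calc Mp = V * (U * Mp * Uᵀ) * Vᵀ := (hVsand Mp).symm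
        _ = V * (U * (c • (1 : Matrix (Fin k) (Fin k) ℝ)) * Uᵀ) * Vᵀ := by rw [h1]
        _ = c • (1 : Matrix (Fin k) (Fin k) ℝ) := hVsand _
      have h2 : (1/2 : ℝ) • (1 : Matrix (Fin k) (Fin k) ℝ) + t • S
          = c • (1 : Matrix (Fin k) (Fin k) ℝ) := by
        rw [← hMp]
        exact hMp_eq
      have htS : t • S = (c - 1/2) • (1 : Matrix (Fin k) (Fin k) ℝ) := by
        calc t • S = (1/2 : ℝ) • (1 : Matrix (Fin k) (Fin k) ℝ) + t • S
              - (1/2 : ℝ) • (1 : Matrix (Fin k) (Fin k) ℝ) := by abel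
        _ = c • (1 : Matrix (Fin k) (Fin k) ℝ)
              - (1/2 : ℝ) • (1 : Matrix (Fin k) (Fin k) ℝ) := by rw [h2]
        _ = (c - 1/2) • (1 : Matrix (Fin k) (Fin k) ℝ) := by rw [sub_smul]
      have htr2 : t * (∑ a, S a a) = (c - 1/2) * k := by
        have h3 := congrArg (fun M : Matrix (Fin k) (Fin k) ℝ => ∑ a, M a a) htS
        simp only [Matrix.smul_apply, smul_eq_mul, Matrix.one_apply_eq] at h3
        rw [← Finset.mul_sum] at h3
        rw [h3]
        simp [Finset.sum_const, mul_comm]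
        ring
      rw [htr, mul_zero] at htr2
      have hk0' : (k:ℝ) ≠ 0 := Nat.cast_ne_zero.mpr (by omega)
      have hc12 : c - 1/2 = 0 := by
        rcases mul_eq_zero.mp htr2.symm with h | h
        · exact h
        · exact absurd h hk0'
      have hS0 : S = 0 := by
        have hts0 : t • S = 0 := by rw [htS, hc12, zero_smul]
        rcases smul_eq_zero.mp hts0 with h | h
        · exact absurd h (ne_of_gt ht0)
        · exact h
      exact hsE0 ((LinearEquiv.map_eq_zero_iff (toMat k)).mp (by rw [← hS]; exact hS0))
    · -- dimension → extremal
      intro hdim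
      have hWrank' : finrank ℝ WE = (k + 1).choose 2 - 1 := by rw [hWrank]; exact hdim
      have hWEZ : WE = Z := Submodule.eq_of_le_of_finrank_le hWZ (by rw [hZrank, hWrank'])
      have key : ∀ A B : Matrix (Fin p) (Fin p) ℝ, A ∈ psdCone G.Adj → B ∈ psdCone G.Adj →
          X = A + B → ∃ c : ℝ, 0 ≤ c ∧ A = c • X := by
        intro A B hA hB hsum
        have hdecomp : A = U * (V * A * Vᵀ) * Uᵀ := gram_decomp hXU hVU hA.1 hB.1 hsum
        set S : Matrix (Fin k) (Fin k) ℝ := V * A * Vᵀ with hSdef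
        have hSpsd : S.PosSemidef := by
          have hps := hA.1.mul_mul_conjTranspose_same V
          rwa [Matrix.conjTranspose_eq_transpose_of_trivial] at hps
        have hSsym : ∀ a b, S a b = S b a := by
          intro a b
          have hh := hSpsd.isHermitian
          rw [Matrix.IsHermitian, Matrix.conjTranspose_eq_transpose_of_trivial] at hh
          exact (Matrix.ext_iff.mpr hh b a)
        have hAentry : ∀ i j, A i j = ∑ a, ∑ b, u i a * S a b * u j b := by
          intro i j
          conv_lhs => rw [hdecomp]
          exact sandwich_apply u S i j
        have hdiag0 : ∀ a, 0 ≤ S a a := by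
          intro a
          have hq := hSpsd.dotProduct_mulVec_nonneg (Pi.single a 1)
          simpa [dotProduct, Matrix.mulVec, Pi.single_apply, ite_mul] using hq
        set c : ℝ := (∑ a, S a a) / k with hc
        have hc0 : 0 ≤ c := div_nonneg (Finset.sum_nonneg fun a _ => hdiag0 a) (Nat.cast_nonneg k)
        set sE : EuclideanSpace ℝ (Fin k × Fin k) := (toMat k).symm S with hsE
        have htoMat_sE : toMat k sE = S := by rw [hsE, LinearEquiv.apply_symm_apply]
        set sE' : EuclideanSpace ℝ (Fin k × Fin k) := sE - c • idE with hsE'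
        have htoMat_sE' : toMat k sE' = S - c • (1 : Matrix (Fin k) (Fin k) ℝ) := by
          rw [hsE', map_sub, LinearEquiv.map_smul, htoMat_sE, hidE, LinearEquiv.apply_symm_apply]
        have hsE'Z : sE' ∈ Z := by
          show sE' ∈ (ℝ ∙ idE)ᗮ ⊓ symE k
          rw [Submodule.mem_inf]
          refine ⟨?_, ?_⟩
          · rw [Submodule.mem_orthogonal_singleton_iff_inner_right]
            rw [hinner_id, htoMat_sE']
            simp only [Matrix.sub_apply, Matrix.smul_apply, Matrix.one_apply_eq, smul_eq_mul,
              mul_one, Finset.sum_sub_distrib, Finset.sum_const, Finset.card_univ,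
              Fintype.card_fin, nsmul_eq_mul]
            rw [hc]
            field_simp
            ring
          · intro a b
            show toMat k sE' a b = toMat k sE' b a
            rw [htoMat_sE']
            simp only [Matrix.sub_apply, Matrix.smul_apply, smul_eq_mul]
            rw [hSsym a b]
            by_cases hab : a = b
            · subst hab; rfl
            · rw [Matrix.one_apply_ne hab, Matrix.one_apply_ne (Ne.symm hab)]
        have hsE'W : sE' ∈ WEᗮ := by
          have hle2 : WE ≤ (ℝ ∙ sE')ᗮ := by
            rw [hWE, Submodule.span_le]
            rintro gE ⟨g, ⟨i, j, hne, hnadj, rfl⟩, rfl⟩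
            rw [SetLike.mem_coe, Submodule.mem_orthogonal_singleton_iff_inner_right]
            rw [real_inner_comm, hinner_gen i j, htoMat_sE']
            have hq1 : ∀ i' j' : Fin p, i' ≠ j' → ¬ G.Adj i' j' →
                ∑ a, ∑ b, u i' a * (S - c • (1 : Matrix (Fin k) (Fin k) ℝ)) a b * u j' b
                  = 0 := by
              intro i' j' hne' hnadj'
              have hsplit : ∑ a, ∑ b,
                  u i' a * (S - c • (1 : Matrix (Fin k) (Fin k) ℝ)) a b * u j' b
                  = (∑ a, ∑ b, u i' a * S a b * u j' b)
                    - c * ∑ a, ∑ b, u i' a * (1 : Matrix (Fin k) (Fin k) ℝ) a b * u j' b := by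
                rw [Finset.mul_sum, ← Finset.sum_sub_distrib]
                refine Finset.sum_congr rfl fun a _ => ?_
                rw [Finset.mul_sum, ← Finset.sum_sub_distrib]
                refine Finset.sum_congr rfl fun b _ => ?_
                simp only [Matrix.sub_apply, Matrix.smul_apply, smul_eq_mul]
                ring
              rw [hsplit, ← hAentry i' j', one_sandwich, ← hu i' j',
                hA.2 i' j' hne' hnadj', hXzero i' j' hne' hnadj', mul_zero, sub_zero]
            rw [hq1 i j hne hnadj, hq1 j i (Ne.symm hne) (fun h => hnadj (G.adj_symm h)), add_zero]
          rw [Submodule.mem_orthogonal']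
          intro w hw
          exact Submodule.mem_orthogonal_singleton_iff_inner_right.mp (hle2 hw)
        have hbot : sE' ∈ (WE ⊓ WEᗮ : Submodule ℝ (EuclideanSpace ℝ (Fin k × Fin k))) := by
          refine ⟨?_, hsE'W⟩
          rw [hWEZ]
          exact hsE'Z
        rw [Submodule.inf_orthogonal_eq_bot, Submodule.mem_bot] at hbot
        have hS1 : S = c • (1 : Matrix (Fin k) (Fin k) ℝ) := by
          have h0 := congrArg (toMat k) hbot
          rw [htoMat_sE', map_zero] at h0
          exact sub_eq_zero.mp h0
        refine ⟨c, hc0, ?_⟩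
        rw [hdecomp, hS1, hXU, Matrix.mul_smul, Matrix.mul_one, Matrix.smul_mul]
      exact ⟨⟨hXpsd, hXzero⟩, fun A B hA hB hsum =>
        ⟨key A B hA hB hsum, key B A hB hA (by rw [hsum, add_comm])⟩⟩
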